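/- arXiv:1302.6735 — 11 statements merged into one kernel-verified Lean document; each statement's English description precedes it below -/
import Mathlib

section
/- Let a₁,…,aₙ, b₁,…,bₙ be linear operators on a vector space X such that bᵢ ∘ aⱼ = 0 whenever i ≥ j. Define φ(x) = Σᵢ aᵢ ∘ x ∘ bᵢ for x ∈ L(X). Then φ(x)^{n+1} = 0 for every x ∈ L(X). -/
theorem stmt_1 {X : Type*} [AddCommGroup X] [Module ℂ X]
    (n : ℕ) (a b : Fin n → Module.End ℂ X)
    (h : ∀ i j : Fin n, j ≤ i → b i * a j = 0)
    (x : Module.End ℂ X) :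
    (∑ i : Fin n, a i * x * b i) ^ (n + 1) = 0 := by
  have key : ∀ k : ℕ, ∃ c : Fin n → Module.End ℂ X,
      (∑ i : Fin n, a i * x * b i) ^ (k + 1) =
        ∑ j ∈ Finset.univ.filter (fun j : Fin n => k ≤ (j : ℕ)), c j * b j := by
    intro k
    induction k with
    | zero =>
      refine ⟨fun j => a j * x, ?_⟩
      simp [mul_assoc]
    | succ k ih =>
      obtain ⟨c, hc⟩ := ih
      refine ⟨fun i => ∑ j ∈ Finset.univ.filter (fun j : Fin n => k ≤ (j : ℕ)),
        c j * (b j * a i * x), ?_⟩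
      rw [pow_succ, hc, Finset.sum_mul_sum]
      rw [Finset.sum_comm]
      have step : ∀ i : Fin n,
          ∑ j ∈ Finset.univ.filter (fun j : Fin n => k ≤ (j : ℕ)),
            c j * b j * (a i * x * b i) =
          (∑ j ∈ Finset.univ.filter (fun j : Fin n => k ≤ (j : ℕ)),
            c j * (b j * a i * x)) * b i := by
        intro i
        rw [Finset.sum_mul]
        apply Finset.sum_congr rfl
        intro j _
        noncomm_ring
      rw [Finset.sum_congr rfl (fun i _ => step i)]
      symm
      apply Finset.sum_subset
      · intro i hi
        simp
      · intro i _ hi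
        simp only [Finset.mem_filter, Finset.mem_univ, true_and, not_le] at hi
        have hz : ∀ j ∈ Finset.univ.filter (fun j : Fin n => k ≤ (j : ℕ)),
            c j * (b j * a i * x) = 0 := by
          intro j hj
          simp only [Finset.mem_filter, Finset.mem_univ, true_and] at hj
          have : (i : ℕ) ≤ (j : ℕ) := by omega
          rw [h j i this]
          simp
        simp only [Finset.sum_eq_zero hz, zero_mul]
  obtain ⟨c, hc⟩ := key n
  rw [hc]
  apply Finset.sum_eq_zero
  intro j hj
  simp only [Finset.mem_filter, Finset.mem_univ, true_and] at hj
  exact absurd hj (by omega)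
end

section
/- Let a, b, c, d be linear operators on a vector space X satisfying b∘a = 0, d∘c = 0, and b∘c = 0. Then the elementary operator φ(x) = a x b + c x d on L(X) satisfies φ(x)³ = 0 for all x ∈ L(X). -/
theorem stmt_2 {X : Type*} [AddCommGroup X] [Module ℂ X]
    (a b c d : Module.End ℂ X)
    (hba : b * a = 0) (hdc : d * c = 0) (hbc : b * c = 0)
    (x : Module.End ℂ X) :
    (a * x * b + c * x * d) ^ 3 = 0 := by
  have h1 : ∀ y : Module.End ℂ X, b * (a * y) = 0 := fun y => by
    rw [← mul_assoc, hba, zero_mul]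
  have h2 : ∀ y : Module.End ℂ X, d * (c * y) = 0 := fun y => by
    rw [← mul_assoc, hdc, zero_mul]
  have h3 : ∀ y : Module.End ℂ X, b * (c * y) = 0 := fun y => by
    rw [← mul_assoc, hbc, zero_mul]
  have e2 : (a * x * b + c * x * d) ^ 2 = c * x * (d * (a * x * b)) := by
    rw [sq]; noncomm_ring
    simp [mul_assoc, h1, h2, h3]
  rw [pow_succ, e2]
  simp [mul_assoc, h1, h2, h3, mul_add, h1 (x*b), h3 (x*d)]
end

section
/- Let u₁,u₂,u₃, v₁,v₂,v₃ be linear operators on a complex vector space X, and suppose there exist a vector ζ₀ ∈ X and linearly independent linear functionals f, g on X such that the nine compositions vᵢ∘uⱼ form the matrix [[0, ζ₀⊗g, 0],[ζ₀⊗f, 0, ζ₀⊗g],[0, −ζ₀⊗f, 0]] (i.e., v₁u₁ = 0, v₁u₂ = ζ₀⊗g, v₁u₃ = 0, v₂u₁ = ζ₀⊗f, v₂u₂ = 0, v₂u₃ = ζ₀⊗g, v₃u₁ = 0, v₃u₂ = −ζ₀⊗f, v₃u₃ = 0). Then the elementary operator φ(x) = u₁xv₁ + u₂xv₂ + u₃xv₃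 satisfies φ(x)⁵ = 0 for all x ∈ L(X). -/
theorem stmt_3 {X : Type*} [AddCommGroup X] [Module ℂ X]
    (u₁ u₂ u₃ v₁ v₂ v₃ : Module.End ℂ X) (ζ₀ : X) (f g : Module.Dual ℂ X)
    (hfg : LinearIndependent ℂ ![f, g])
    (h11 : v₁ * u₁ = 0) (h12 : ∀ η, (v₁ * u₂) η = g η • ζ₀) (h13 : v₁ * u₃ = 0)
    (h21 : ∀ η, (v₂ * u₁) η = f η • ζ₀) (h22 : v₂ * u₂ = 0)
    (h23 : ∀ η, (v₂ * u₃) η = g η • ζ₀)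
    (h31 : v₃ * u₁ = 0) (h32 : ∀ η, (v₃ * u₂) η = -(f η • ζ₀)) (h33 : v₃ * u₃ = 0)
    (x : Module.End ℂ X) :
    (u₁ * x * v₁ + u₂ * x * v₂ + u₃ * x * v₃) ^ 5 = 0 := by
  set φ : Module.End ℂ X := u₁ * x * v₁ + u₂ * x * v₂ + u₃ * x * v₃ with hφ
  have e11 : ∀ ξ, v₁ (u₁ ξ) = 0 := fun ξ => congrArg (fun t => t ξ) h11
  have e13 : ∀ ξ, v₁ (u₃ ξ) = 0 := fun ξ => congrArg (fun t => t ξ) h13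
  have e22 : ∀ ξ, v₂ (u₂ ξ) = 0 := fun ξ => congrArg (fun t => t ξ) h22
  have e31 : ∀ ξ, v₃ (u₁ ξ) = 0 := fun ξ => congrArg (fun t => t ξ) h31
  have e33 : ∀ ξ, v₃ (u₃ ξ) = 0 := fun ξ => congrArg (fun t => t ξ) h33
  have k1 : ∀ ξ, φ (u₁ ξ) = f ξ • u₂ (x ζ₀) := by
    intro ξ
    have h21' : v₂ (u₁ ξ) = f ξ • ζ₀ := h21 ξ
    simp [hφ, Module.End.mul_apply, e11 ξ, e31 ξ, h21', map_smul]
  have k2 : ∀ ξ, φ (u₂ ξ) = g ξ • u₁ (x ζ₀) - f ξ • u₃ (x ζ₀) := by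
    intro ξ
    have h12' : v₁ (u₂ ξ) = g ξ • ζ₀ := h12 ξ
    have h32' : v₃ (u₂ ξ) = -(f ξ • ζ₀) := h32 ξ
    simp [hφ, Module.End.mul_apply, e22 ξ, h12', h32', map_smul, map_neg,
      sub_eq_add_neg]
  have k3 : ∀ ξ, φ (u₃ ξ) = g ξ • u₂ (x ζ₀) := by
    intro ξ
    have h23' : v₂ (u₃ ξ) = g ξ • ζ₀ := h23 ξ
    simp [hφ, Module.End.mul_apply, e13 ξ, e33 ξ, h23', map_smul]
  ext η
  have step0 : φ η = u₁ (x (v₁ η)) + u₂ (x (v₂ η)) + u₃ (x (v₃ η)) := by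
    simp [hφ, Module.End.mul_apply]
  have : (φ ^ 5) η = φ (φ (φ (φ (φ η)))) := by
    simp [pow_succ, Module.End.mul_apply]
  rw [show ((u₁ * x * v₁ + u₂ * x * v₂ + u₃ * x * v₃) ^ 5) η = (φ ^ 5) η from rfl,
    this, step0]
  simp only [map_add, map_sub, map_smul, map_neg, k1, k2, k3, smul_sub, smul_smul, LinearMap.zero_apply]
  module
end

section
/- Let u₁,u₂,u₃, v₁,v₂,v₃ be linear operators on a complex vector space X, and suppose there exist linearly independent vectors ζ₀, ζ₁ ∈ X and a linear functional f on X such that v₁u₁ = 0, v₁u₂ = ζ₁⊗f, v₁u₃ = 0, v₂u₁ = ζ₀⊗f, v₂u₂ = 0, v₂u₃ = ζ₁⊗f, v₃u₁ = 0, v₃u₂ = −ζ₀⊗f, v₃u₃ = 0. Then the elementary operator φ(x) = u₁xv₁ + u₂xv₂ + u₃xv₃ satisfies φ(x)⁵ = 0 for all x ∈ L(X). -/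
def Ee {X : Type*} [AddCommGroup X] [Module ℂ X] (f : Module.Dual ℂ X) (w : X) :
    Module.End ℂ X := f.smulRight w

lemma Ee_key' {X : Type*} [AddCommGroup X] [Module ℂ X] (f : Module.Dual ℂ X)
    (x : Module.End ℂ X) (w w' : X) (p : Module.End ℂ X) :
    p * Ee f w * x * Ee f w' = f (x w') • (p * Ee f w) := by
  have h : Ee f w * x * Ee f w' = f (x w') • Ee f w := by
    ext η
    simp [Ee, Module.End.mul_apply, map_smul, smul_smul, smul_eq_mul, mul_comm]
  calc p * Ee f w * x * Ee f w' = p * (Ee f w * x * Ee f w') := by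
        simp [mul_assoc]
    _ = f (x w') • (p * Ee f w) := by rw [h, mul_smul_comm]

theorem stmt_4 {X : Type*} [AddCommGroup X] [Module ℂ X]
    (u₁ u₂ u₃ v₁ v₂ v₃ : Module.End ℂ X) (ζ₀ ζ₁ : X) (f : Module.Dual ℂ X)
    (hζ : LinearIndependent ℂ ![ζ₀, ζ₁])
    (h11 : v₁ * u₁ = 0) (h12 : ∀ η, (v₁ * u₂) η = f η • ζ₁) (h13 : v₁ * u₃ = 0)
    (h21 : ∀ η, (v₂ * u₁) η = f η • ζ₀) (h22 : v₂ * u₂ = 0)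
    (h23 : ∀ η, (v₂ * u₃) η = f η • ζ₁)
    (h31 : v₃ * u₁ = 0) (h32 : ∀ η, (v₃ * u₂) η = -(f η • ζ₀)) (h33 : v₃ * u₃ = 0)
    (x : Module.End ℂ X) :
    (u₁ * x * v₁ + u₂ * x * v₂ + u₃ * x * v₃) ^ 5 = 0 := by
  have he12 : v₁ * u₂ = Ee f ζ₁ := LinearMap.ext fun η => by simpa [Ee] using h12 η
  have he21 : v₂ * u₁ = Ee f ζ₀ := LinearMap.ext fun η => by simpa [Ee] using h21 η
  have he23 : v₂ * u₃ = Ee f ζ₁ := LinearMap.ext fun η => by simpa [Ee] using h23 η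
  have he32 : v₃ * u₂ = -Ee f ζ₀ := LinearMap.ext fun η => by simpa [Ee] using h32 η
  set T := u₁ * x * v₁ + u₂ * x * v₂ + u₃ * x * v₃ with hT
  have rg1 : ∀ p q r s : Module.End ℂ X, (p*x*q)*(r*x*s) = p*x*(q*r)*x*s := by
    intros; simp [mul_assoc]
  have rg2 : ∀ p q r s t : Module.End ℂ X,
      (p*x*q*x*r)*(s*x*t) = p*x*q*x*(r*s)*x*t := by
    intros; simp [mul_assoc]
  have rg3 : ∀ p q r s t m : Module.End ℂ X,
      (p*x*q*x*r)*(s*x*t*x*m) = p*x*q*x*(r*s)*x*t*x*m := by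
    intros; simp [mul_assoc]
  have hT2 : T*T = u₁*x*Ee f ζ₁*x*v₂ + u₂*x*Ee f ζ₀*x*v₁ + u₂*x*Ee f ζ₁*x*v₃
      - u₃*x*Ee f ζ₀*x*v₂ := by
    rw [hT]
    simp only [add_mul, mul_add, rg1, h11, he12, h13, he21, h22, he23, h31, he32, h33,
      mul_zero, zero_mul, add_zero, zero_add, mul_neg, neg_mul]
    abel
  have hT3 : T*T*T = f (x ζ₀) • (u₁*x*Ee f ζ₁*x*v₁) + f (x ζ₁) • (u₁*x*Ee f ζ₁*x*v₃)
      + f (x ζ₁) • (u₂*x*Ee f ζ₀*x*v₂) - f (x ζ₀) • (u₂*x*Ee f ζ₁*x*v₂)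
      - f (x ζ₀) • (u₃*x*Ee f ζ₀*x*v₁) - f (x ζ₁) • (u₃*x*Ee f ζ₀*x*v₃) := by
    rw [hT2]
    rw [hT]
    simp only [add_mul, mul_add, sub_mul, mul_sub, rg2, h11, he12, h13, he21, h22, he23,
      h31, he32, h33, mul_zero, zero_mul, add_zero, zero_add, mul_neg, neg_mul, neg_neg,
      Ee_key' f x, smul_mul_assoc, mul_smul_comm, smul_smul, sub_zero, zero_sub, smul_neg]
    module
  have h5 : T^5 = (T*T)*(T*T*T) := by
    rw [show (5:ℕ) = 2 + 3 by norm_num, pow_add, pow_two, pow_succ, pow_two]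
  rw [h5, hT3, hT2]
  simp only [add_mul, mul_add, sub_mul, mul_sub, mul_smul_comm, smul_mul_assoc, rg3,
    h11, he12, h13, he21, h22, he23, h31, he32, h33,
    mul_zero, zero_mul, add_zero, zero_add, mul_neg, neg_mul, neg_neg, smul_zero,
    Ee_key' f x, smul_smul, sub_zero, zero_sub, smul_neg, neg_smul]
  module
end

section
/- Let X be an infinite-dimensional (or any) complex vector space and V₁,…,V_k finitely many finite-dimensional subspaces of L(X). Then there exists a single vector ζ ∈ X such that dim Vᵢζ = lDim Vᵢ simultaneously for all i = 1,…,k, where Vᵢζ = {Tζ : T ∈ Vᵢ} and lDim Vᵢ is the maximum of dim Vᵢη over η ∈ X. -/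
set_option maxRecDepth 4000

open Module Polynomial

section aux

variable {X : Type*} [AddCommGroup X] [Module ℂ X]

/-- The subspace `{Tx : T ∈ V}` of `X`. -/
noncomputable def Emap (V : Submodule ℂ (Module.End ℂ X)) (x : X) : Submodule ℂ X :=
  V.map (LinearMap.applyₗ x)

lemma span_eq_Emap (V : Submodule ℂ (Module.End ℂ X)) (x : X) :
    Submodule.span ℂ {y : X | ∃ T ∈ V, T x = y} = Emap V x := by
  have h : {y : X | ∃ T ∈ V, T x = y} = ↑(Emap V x) := by
    ext y
    simp [Emap, Submodule.mem_map, LinearMap.applyₗ]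
    exact Iff.rfl
  rw [h, Submodule.span_eq]

instance Emap_fd (V : Submodule ℂ (Module.End ℂ X)) [FiniteDimensional ℂ V] (x : X) :
    FiniteDimensional ℂ (Emap V x) := by
  unfold Emap; infer_instance

lemma Emap_smul (V : Submodule ℂ (Module.End ℂ X)) {c : ℂ} (hc : c ≠ 0) (x : X) :
    Emap V (c • x) = Emap V x := by
  ext y
  simp only [Emap, Submodule.mem_map]
  constructor
  · rintro ⟨T, hT, rfl⟩
    exact ⟨c • T, V.smul_mem c hT, by
      simp [LinearMap.applyₗ, map_smul]⟩
  · rintro ⟨T, hT, rfl⟩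
    refine ⟨c⁻¹ • T, V.smul_mem c⁻¹ hT, ?_⟩
    simp [LinearMap.applyₗ, map_smul, smul_smul, inv_mul_cancel₀ hc]

lemma exists_max (V : Submodule ℂ (Module.End ℂ X)) [FiniteDimensional ℂ V] :
    ∃ η₀ : X, ∀ η : X, finrank ℂ (Emap V η) ≤ finrank ℂ (Emap V η₀) := by
  let s : Set ℕ := Set.range fun η : X => finrank ℂ (Emap V η)
  have hne : s.Nonempty := ⟨_, ⟨(0 : X), rfl⟩⟩
  have hbdd : BddAbove s := by
    refine ⟨finrank ℂ V, ?_⟩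
    rintro n ⟨η, rfl⟩
    exact Submodule.finrank_map_le _ _
  obtain ⟨η₀, hη₀⟩ := Nat.sSup_mem hne hbdd
  refine ⟨η₀, fun η => ?_⟩
  have h := le_csSup hbdd (⟨η, rfl⟩ : finrank ℂ (Emap V η) ∈ s)
  rw [← hη₀] at h
  exact h

lemma bad_finite (V : Submodule ℂ (Module.End ℂ X)) [FiniteDimensional ℂ V] (ζ η : X) :
    {t : ℂ | finrank ℂ (Emap V (ζ + t • η)) < finrank ℂ (Emap V ζ)}.Finite := by
  set r := finrank ℂ (Emap V ζ) with hr
  let b : Basis (Fin r) ℂ (Emap V ζ) := finBasis ℂ (Emap V ζ)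
  have hS : ∀ c : Fin r, ∃ S ∈ V, S ζ = (b c : X) := by
    intro c
    obtain ⟨T, hT, hTe⟩ := Submodule.mem_map.mp ((b c).2 : (b c : X) ∈ Emap V ζ)
    exact ⟨T, hT, hTe⟩
  choose S hSV hSζ using hS
  have hFex : ∀ a : Fin r, ∃ F : X →ₗ[ℂ] ℂ, F ∘ₗ (Emap V ζ).subtype = b.coord a := fun a =>
    LinearMap.exists_extend _
  choose F hF using hFex
  have hFb : ∀ a c : Fin r, F a (b c : X) = if a = c then 1 else 0 := by
    intro a c
    have h1 : F a ((Emap V ζ).subtype (b c)) = b.coord a (b c) := by rw [← hF a]; rfl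
    simp only [Submodule.subtype_apply] at h1
    rw [h1, Basis.coord_apply, Basis.repr_self]
    simp [Finsupp.single_apply, eq_comm]
  let A : Matrix (Fin r) (Fin r) ℂ := Matrix.of fun a c => F a (S c ζ)
  let B : Matrix (Fin r) (Fin r) ℂ := Matrix.of fun a c => F a (S c η)
  let M : Matrix (Fin r) (Fin r) ℂ[X] := Matrix.of fun a c => C (A a c) + Polynomial.X * C (B a c)
  let p : ℂ[X] := M.det
  have hA : A = 1 := by
    ext a c
    rw [Matrix.one_apply]
    show F a (S c ζ) = _
    rw [hSζ, hFb]
  have hpev : ∀ t : ℂ, p.eval t = (A + t • B).det := by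
    intro t
    have h := RingHom.map_det (evalRingHom t) M
    have h2 : M.map (evalRingHom t) = A + t • B := by
      ext a c
      rw [Matrix.map_apply, Matrix.add_apply, Matrix.smul_apply]
      show (evalRingHom t) (C (A a c) + Polynomial.X * C (B a c)) = _
      simp only [coe_evalRingHom, eval_add, eval_mul, eval_C, eval_X, smul_eq_mul]
    rw [show p.eval t = (evalRingHom t) M.det from rfl, h, RingHom.mapMatrix_apply, h2]
  have hp0 : p.eval 0 = 1 := by
    rw [hpev 0, zero_smul, add_zero, hA, Matrix.det_one]
  have hpne : p ≠ 0 := by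
    intro h
    rw [h] at hp0
    simp at hp0
  have key : ∀ t : ℂ, ¬ p.IsRoot t → r ≤ finrank ℂ (Emap V (ζ + t • η)) := by
    intro t ht
    have hdet : IsUnit (A + t • B).det := by
      rw [← hpev t]
      exact Ne.isUnit (by simpa [Polynomial.IsRoot] using ht)
    have hli : LinearIndependent ℂ (fun c => (A + t • B).transpose c) :=
      Matrix.linearIndependent_cols_iff_isUnit.2 ((Matrix.isUnit_iff_isUnit_det _).2 hdet)
    -- the transposed columns are the images of `S c (ζ + t • η)` under the functionals
    let G : X →ₗ[ℂ] (Fin r → ℂ) := LinearMap.pi F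
    have hGu : ∀ c, G (S c (ζ + t • η)) = (A + t • B).transpose c := by
      intro c
      funext a
      simp only [G, LinearMap.pi_apply, Matrix.transpose_apply, Matrix.add_apply,
        Matrix.smul_apply, A, B, Matrix.of_apply, smul_eq_mul]
      rw [map_add, map_smul, map_add, map_smul]
      simp [smul_eq_mul]
    have hliu : LinearIndependent ℂ (fun c => S c (ζ + t • η)) := by
      apply LinearIndependent.of_comp G
      convert hli using 1
      funext c
      exact hGu c
    have hmem : ∀ c, S c (ζ + t • η) ∈ Emap V (ζ + t • η) := by
      intro c
      exact ⟨S c, hSV c, rfl⟩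
    let v : Fin r → Emap V (ζ + t • η) := fun c => ⟨S c (ζ + t • η), hmem c⟩
    have hliv : LinearIndependent ℂ v := by
      apply LinearIndependent.of_comp (Emap V (ζ + t • η)).subtype
      convert hliu using 1
      rfl
    simpa using hliv.fintype_card_le_finrank
  apply Set.Finite.subset (Polynomial.finite_setOf_isRoot hpne)
  intro t ht
  simp only [Set.mem_setOf_eq] at ht ⊢
  by_contra h
  exact absurd (key t h) (by omega)

lemma main_aux : ∀ (k : ℕ) (V : Fin k → Submodule ℂ (Module.End ℂ X)),
    (∀ i, FiniteDimensional ℂ (V i)) →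
    ∃ ζ : X, ∀ i : Fin k, ∀ η : X, finrank ℂ (Emap (V i) η) ≤ finrank ℂ (Emap (V i) ζ) := by
  intro k
  induction k with
  | zero => exact fun V hV => ⟨0, fun i => i.elim0⟩
  | succ k ih =>
    intro V hV
    haveI : ∀ i, FiniteDimensional ℂ (V i) := hV
    obtain ⟨ζ, hζ⟩ := ih (fun i => V i.succ) (fun i => hV i.succ)
    obtain ⟨η₀, hη₀⟩ := exists_max (V 0)
    have hbad : ∀ i : Fin k,
        ({t : ℂ | finrank ℂ (Emap (V i.succ) (ζ + t • η₀)) <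
          finrank ℂ (Emap (V i.succ) ζ)}).Finite := fun i => bad_finite _ _ _
    have hbad0 := bad_finite (V 0) η₀ ζ
    have hfin : (({(0:ℂ)} ∪ (fun s : ℂ => s⁻¹) ''
        {s : ℂ | finrank ℂ (Emap (V 0) (η₀ + s • ζ)) < finrank ℂ (Emap (V 0) η₀)}) ∪
        ⋃ i : Fin k, {t : ℂ | finrank ℂ (Emap (V i.succ) (ζ + t • η₀)) <
          finrank ℂ (Emap (V i.succ) ζ)}).Finite :=
      (((Set.finite_singleton _).union (hbad0.image _)).union (Set.finite_iUnion hbad))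
    obtain ⟨t, ht⟩ := hfin.infinite_compl.nonempty
    simp only [Set.mem_compl_iff, Set.mem_union, Set.mem_singleton_iff, Set.mem_image,
      Set.mem_iUnion, Set.mem_setOf_eq, not_or, not_exists] at ht
    obtain ⟨⟨ht0, htinv⟩, htsucc⟩ := ht
    refine ⟨ζ + t • η₀, ?_⟩
    intro i η
    refine Fin.cases ?_ ?_ i
    · -- case i = 0
      have hscale : Emap (V 0) (ζ + t • η₀) = Emap (V 0) (η₀ + t⁻¹ • ζ) := by
        have he : ζ + t • η₀ = t • (η₀ + t⁻¹ • ζ) := by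
          rw [smul_add, smul_smul, mul_inv_cancel₀ ht0, one_smul, add_comm]
        rw [he, Emap_smul _ ht0]
      rw [hscale]
      have hni : ¬ finrank ℂ (Emap (V 0) (η₀ + t⁻¹ • ζ)) < finrank ℂ (Emap (V 0) η₀) := by
        intro hlt
        exact htinv t⁻¹ ⟨hlt, inv_inv t⟩
      exact le_trans (hη₀ η) (not_lt.1 hni)
    · intro j
      have hni : ¬ finrank ℂ (Emap (V j.succ) (ζ + t • η₀)) < finrank ℂ (Emap (V j.succ) ζ) :=
        fun hlt => (htsucc j) hlt
      exact le_trans (hζ j η) (not_lt.1 hni)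

end aux

theorem stmt_7 {X : Type*} [AddCommGroup X] [Module ℂ X]
    (k : ℕ) (V : Fin k → Submodule ℂ (Module.End ℂ X))
    (hV : ∀ i, FiniteDimensional ℂ (V i)) :
    ∃ ζ : X, ∀ i : Fin k, ∀ η : X,
      Module.finrank ℂ (Submodule.span ℂ {y : X | ∃ T ∈ V i, T η = y}) ≤
      Module.finrank ℂ (Submodule.span ℂ {y : X | ∃ T ∈ V i, T ζ = y}) := by
  obtain ⟨ζ, hζ⟩ := main_aux k V hV
  refine ⟨ζ, fun i η => ?_⟩
  rw [span_eq_Emap, span_eq_Emap]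
  exact hζ i η
end

section
/- Let X be a complex vector space of dimension at least 2, ζ₀ ∈ X, and f₁, f₂ linearly independent linear functionals on X. Set aᵢ = ζ₀⊗fᵢ (rank-one operators) and let b₁, b₂ ∈ L(X) be arbitrary. If the elementary operator φ(x) = a₁xb₁ + a₂xb₂ is such that φ(x) is quasi-nilpotent (has no nonzero eigenvalue) for every x ∈ L(X), then bᵢ∘aⱼ = 0 for all i, j ∈ {1,2}, equivalently bᵢζ₀ = 0 for i = 1,2. -/
private lemma aux_dual {X : Type*} [AddCommGroup X] [Module ℂ X]
    (f g : Module.Dual ℂ X) (hfg : ∀ a : ℂ, a • g ≠ f) :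
    ∃ v, f v = 1 ∧ g v = 0 := by
  have hker : ¬ LinearMap.ker g ≤ LinearMap.ker f := by
    intro hle
    have : f ∈ Submodule.span ℂ (Set.range (fun _ : Unit => g)) := by
      apply mem_span_of_iInf_ker_le_ker (L := fun _ : Unit => g)
      simpa using hle
    rw [Set.range_const, Submodule.mem_span_singleton] at this
    obtain ⟨a, ha⟩ := this
    exact hfg a ha
  obtain ⟨w, hw⟩ := Set.not_subset.1 hker
  have hfw : f w ≠ 0 := hw.2
  have hgw : g w = 0 := hw.1
  exact ⟨(f w)⁻¹ • w, by simp [inv_mul_cancel₀ hfw], by simp [hgw]⟩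

private lemma aux_one {X : Type*} [AddCommGroup X] [Module ℂ X]
    {ξ : X} (hξ : ξ ≠ 0) : ∃ φ : Module.Dual ℂ X, φ ξ = 1 := by
  have := (Module.forall_dual_apply_eq_zero_iff ℂ ξ).not.2 hξ
  push_neg at this
  obtain ⟨φ, hφ⟩ := this
  exact ⟨(φ ξ)⁻¹ • φ, by simp [inv_mul_cancel₀ hφ]⟩

private lemma aux_main {X : Type*} [AddCommGroup X] [Module ℂ X]
    (ζ₀ : X) (f₁ f₂ : Module.Dual ℂ X)
    (a₁ a₂ b₁ b₂ : Module.End ℂ X)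
    (ha₁ : ∀ η, a₁ η = f₁ η • ζ₀) (ha₂ : ∀ η, a₂ η = f₂ η • ζ₀)
    (h : ∀ x : Module.End ℂ X, ∀ c : ℂ, c ≠ 0 →
      ¬ Module.End.HasEigenvalue (a₁ * x * b₁ + a₂ * x * b₂) c)
    (v : X) (hv1 : f₁ v = 1) (hv2 : f₂ v = 0) : b₁ ζ₀ = 0 := by
  by_contra hb
  have hζ : ζ₀ ≠ 0 := fun h0 => hb (by rw [h0, map_zero])
  obtain ⟨g, hg⟩ := aux_one hb
  set x : Module.End ℂ X := g.smulRight v with hx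
  apply h x 1 one_ne_zero
  apply Module.End.hasEigenvalue_of_hasEigenvector (x := ζ₀)
  refine ⟨Module.End.mem_eigenspace_iff.2 ?_, hζ⟩
  have hxapp : ∀ ξ, x ξ = g ξ • v := fun ξ => rfl
  have : (a₁ * x * b₁ + a₂ * x * b₂) ζ₀
      = (g (b₁ ζ₀) * f₁ v + g (b₂ ζ₀) * f₂ v) • ζ₀ := by
    simp [Module.End.mul_apply, ha₁, ha₂, hxapp, add_smul, mul_comm]
  rw [this, hv1, hv2, hg]
  norm_num

theorem stmt_8 {X : Type*} [AddCommGroup X] [Module ℂ X]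
    (hdim : 2 ≤ Module.rank ℂ X)
    (ζ₀ : X) (f₁ f₂ : Module.Dual ℂ X) (hf : LinearIndependent ℂ ![f₁, f₂])
    (a₁ a₂ b₁ b₂ : Module.End ℂ X)
    (ha₁ : ∀ η, a₁ η = f₁ η • ζ₀) (ha₂ : ∀ η, a₂ η = f₂ η • ζ₀)
    (h : ∀ x : Module.End ℂ X, ∀ c : ℂ, c ≠ 0 →
      ¬ Module.End.HasEigenvalue (a₁ * x * b₁ + a₂ * x * b₂) c) :
    b₁ ζ₀ = 0 ∧ b₂ ζ₀ = 0 ∧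
      b₁ * a₁ = 0 ∧ b₁ * a₂ = 0 ∧ b₂ * a₁ = 0 ∧ b₂ * a₂ = 0 := by
  rw [linearIndependent_fin2] at hf
  simp only [Matrix.cons_val_one, Matrix.head_cons, Matrix.cons_val_zero] at hf
  have hf21 : ∀ a : ℂ, a • f₂ ≠ f₁ := hf.2
  have hf12 : ∀ a : ℂ, a • f₁ ≠ f₂ := by
    intro a ha
    rcases eq_or_ne a 0 with rfl | ha0
    · exact hf.1 (by simpa using ha.symm)
    · exact hf21 a⁻¹ (by rw [← ha, smul_smul, inv_mul_cancel₀ ha0, one_smul])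
  obtain ⟨v₁, hv11, hv12⟩ := aux_dual f₁ f₂ hf21
  obtain ⟨v₂, hv22, hv21⟩ := aux_dual f₂ f₁ hf12
  have h' : ∀ x : Module.End ℂ X, ∀ c : ℂ, c ≠ 0 →
      ¬ Module.End.HasEigenvalue (a₂ * x * b₂ + a₁ * x * b₁) c := by
    intro x c hc
    rw [add_comm]
    exact h x c hc
  have hb1 : b₁ ζ₀ = 0 := aux_main ζ₀ f₁ f₂ a₁ a₂ b₁ b₂ ha₁ ha₂ h v₁ hv11 hv12
  have hb2 : b₂ ζ₀ = 0 := aux_main ζ₀ f₂ f₁ a₂ a₁ b₂ b₁ ha₂ ha₁ h' v₂ hv22 hv21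
  refine ⟨hb1, hb2, ?_, ?_, ?_, ?_⟩ <;>
    · ext η
      simp [Module.End.mul_apply, ha₁, ha₂, hb1, hb2]
end

section
/- Let X be a complex vector space, ζ₀ ∈ X, and f₁,…,fₙ linearly independent linear functionals on X. Set aᵢ = ζ₀⊗fᵢ and let b₁,…,bₙ ∈ L(X). If for every x ∈ L(X) the operator φ(x) = Σᵢ aᵢ x bᵢ has no nonzero eigenvalue, then bᵢζ₀ = 0 for every i, and hence bᵢ∘aⱼ = 0 for all i, j. -/
theorem stmt_9 {X : Type*} [AddCommGroup X] [Module ℂ X]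
    (n : ℕ) (ζ₀ : X) (f : Fin n → Module.Dual ℂ X) (hf : LinearIndependent ℂ f)
    (a b : Fin n → Module.End ℂ X)
    (ha : ∀ i, ∀ η, a i η = f i η • ζ₀)
    (h : ∀ x : Module.End ℂ X, ∀ c : ℂ, c ≠ 0 →
      ¬ Module.End.HasEigenvalue (∑ i : Fin n, a i * x * b i) c) :
    (∀ i, b i ζ₀ = 0) ∧ ∀ i j, b i * a j = 0 := by
  have key : ∀ i, b i ζ₀ = 0 := by
    by_cases hz : ζ₀ = 0
    · intro i; simp [hz]
    · have hsum : ∀ x : Module.End ℂ X, ∑ i, f i (x (b i ζ₀)) = 0 := by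
        intro x
        by_contra hc
        apply h x _ hc
        apply Module.End.hasEigenvalue_of_hasEigenvector (x := ζ₀)
        refine ⟨Module.End.mem_eigenspace_iff.mpr ?_, hz⟩
        simp only [LinearMap.sum_apply, Module.End.mul_apply, ha, Finset.sum_smul]
      intro i
      by_contra hv
      obtain ⟨g, hg⟩ : ∃ g : Module.Dual ℂ X, g (b i ζ₀) ≠ 0 := by
        by_contra hA
        push_neg at hA
        exact hv ((Module.forall_dual_apply_eq_zero_iff ℂ _).mp hA)
      have hF : (∑ j, g (b j ζ₀) • f j) ≠ 0 := by
        intro h0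
        exact hg (Fintype.linearIndependent_iff.mp hf (fun j => g (b j ζ₀)) h0 i)
      obtain ⟨w, hw⟩ : ∃ w, (∑ j, g (b j ζ₀) • f j) w ≠ 0 := by
        by_contra hA
        push_neg at hA
        exact hF (LinearMap.ext hA)
      apply hw
      have := hsum (g.smulRight w)
      simpa [LinearMap.sum_apply, mul_comm] using this
  refine ⟨key, fun i j => ?_⟩
  ext η
  simp [Module.End.mul_apply, ha, key]
end

section
/- Let N be a linear subspace of M₃(ℂ) consisting entirely of nilpotent matrices, with dim N = 2. Then either N is simultaneously triangularizable (there exists an invertible P with P⁻¹NP contained in the strictly upper triangular matrices), or N is conjugate to the space {[[0,β,0],[α,0,β],[0,−α,0]] : α,β ∈ ℂ}. -/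
open Matrix

private lemma cube_zero {M : Matrix (Fin 3) (Fin 3) ℂ} (h : IsNilpotent M) : M ^ 3 = 0 := by
  have h1 := Matrix.isNilpotent_charpoly_sub_pow_of_isNilpotent h
  have h2 : M.charpoly - Polynomial.X ^ (Fintype.card (Fin 3)) = 0 := h1.eq_zero
  have h3 : M.charpoly = Polynomial.X ^ 3 := by
    rw [sub_eq_zero] at h2; simpa using h2
  have h4 := M.aeval_self_charpoly
  rw [h3] at h4
  simpa using h4

private lemma exists_mulVec_ne_zero {A : Matrix (Fin 3) (Fin 3) ℂ} (h : A ≠ 0) :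
    ∃ v, A.mulVec v ≠ 0 := by
  contrapose! h
  ext i j
  have := congrFun (h (Pi.single j 1)) i
  simpa [Matrix.mulVec_single] using this

private lemma key3 (M : Matrix (Fin 3) (Fin 3) ℂ) (x y z : Fin 3 → ℂ) (a b c : ℂ)
    (h : a • x + b • y + c • z = 0) :
    a • M.mulVec x + b • M.mulVec y + c • M.mulVec z = 0 := by
  have := congrArg M.mulVec h
  simpa [Matrix.mulVec_add, Matrix.mulVec_smul] using this

private lemma unit_of_cols {f : Fin 3 → (Fin 3 → ℂ)} (h : LinearIndependent ℂ f) :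
    IsUnit (Matrix.of fun i k => f k i) := by
  rw [← Matrix.linearIndependent_cols_iff_isUnit]
  have : (fun k => (Matrix.of fun i k => f k i)ᵀ k) = f := by
    funext k; ext j; simp [Matrix.transpose]
  rw [show (Matrix.of fun i k => f k i).col = f from this]; exact h

private lemma jordan3 {A : Matrix (Fin 3) (Fin 3) ℂ} (h3 : A ^ 3 = 0) (h2 : A * A ≠ 0) :
    ∃ P : Matrix (Fin 3) (Fin 3) ℂ, IsUnit P ∧
      A * P = P * !![(0:ℂ),1,0;0,0,1;0,0,0] := by
  obtain ⟨v, hv⟩ := exists_mulVec_ne_zero h2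
  have hAAA : A * A * A = 0 := by
    have := h3; rw [pow_succ, pow_two] at this; exact this
  have hA3 : A * (A * A) = 0 := by rw [← mul_assoc]; exact hAAA
  have hA4 : (A * A) * (A * A) = 0 := by
    rw [mul_assoc, ← mul_assoc A A A, hAAA]; simp
  set f : Fin 3 → (Fin 3 → ℂ) := ![(A*A).mulVec v, A.mulVec v, v] with hf
  have hind : LinearIndependent ℂ f := by
    rw [Fintype.linearIndependent_iff]
    intro g hg
    have hsum : g 0 • (A*A).mulVec v + g 1 • A.mulVec v + g 2 • v = 0 := by
      simpa [hf, Fin.sum_univ_three] using hg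
    have h2' := key3 (A*A) _ _ _ _ _ _ hsum
    rw [Matrix.mulVec_mulVec, Matrix.mulVec_mulVec, hA4, mul_assoc, hA3] at h2'
    simp only [Matrix.zero_mulVec, smul_zero, zero_add] at h2'
    have hg2 : g 2 = 0 := by
      rcases smul_eq_zero.mp h2' with h | h
      · exact h
      · exact absurd h hv
    have h1' := key3 A _ _ _ _ _ _ hsum
    rw [Matrix.mulVec_mulVec, Matrix.mulVec_mulVec, hA3, hg2, zero_smul, add_zero] at h1'
    simp only [Matrix.zero_mulVec, smul_zero, zero_add] at h1'
    have hg1 : g 1 = 0 := by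
      rcases smul_eq_zero.mp h1' with h | h
      · exact h
      · exact absurd h hv
    rw [hg1, hg2, zero_smul, zero_smul, add_zero, add_zero] at hsum
    have hg0 : g 0 = 0 := by
      rcases smul_eq_zero.mp hsum with h | h
      · exact h
      · exact absurd h hv
    intro i; fin_cases i <;> assumption
  refine ⟨Matrix.of fun i k => f k i, unit_of_cols hind, ?_⟩
  have e0 : A.mulVec ((A*A).mulVec v) = 0 := by
    rw [Matrix.mulVec_mulVec, ← mul_assoc, hAAA, Matrix.zero_mulVec]
  have e1 : A.mulVec (A.mulVec v) = (A*A).mulVec v := by rw [Matrix.mulVec_mulVec]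
  ext i k
  have E0 := congrFun e0 i
  have E1 := congrFun e1 i
  simp only [Matrix.mulVec, dotProduct, Matrix.mul_apply, Fin.sum_univ_three,
    Pi.zero_apply] at E0 E1
  simp only [Matrix.mul_apply, Matrix.of_apply, Fin.sum_univ_three]
  fin_cases k
  · simp only [hf]
    simp [Matrix.mulVec, dotProduct, Matrix.mul_apply, Fin.sum_univ_three,
      Matrix.vecHead, Matrix.vecTail]
    linear_combination E0
  · simp only [hf]
    simp [Matrix.mulVec, dotProduct, Matrix.mul_apply, Fin.sum_univ_three,
      Matrix.vecHead, Matrix.vecTail]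
    linear_combination E1
  · simp only [hf]
    simp [Matrix.mulVec, dotProduct, Matrix.mul_apply, Fin.sum_univ_three,
      Matrix.vecHead, Matrix.vecTail]

private lemma rank1 {A : Matrix (Fin 3) (Fin 3) ℂ} (h2 : A * A = 0) (h0 : A ≠ 0) :
    ∃ P : Matrix (Fin 3) (Fin 3) ℂ, IsUnit P ∧
      A * P = P * !![(0:ℂ),0,1;0,0,0;0,0,0] := by
  obtain ⟨w, hw⟩ := exists_mulVec_ne_zero h0
  set u : Fin 3 → ℂ := A.mulVec w with hu_def
  have hu : A.mulVec u = 0 := by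
    rw [hu_def, Matrix.mulVec_mulVec, h2, Matrix.zero_mulVec]
  have hx : ∃ x, A.mulVec x = 0 ∧ x ∉ (ℂ ∙ u) := by
    by_contra hc
    push_neg at hc
    have hK : LinearMap.ker A.mulVecLin ≤ (ℂ ∙ u) := by
      intro x hxk
      exact hc x (by simpa [Matrix.mulVecLin] using hxk)
    have hrange : LinearMap.range A.mulVecLin ≤ LinearMap.ker A.mulVecLin := by
      rintro y ⟨z, rfl⟩
      simp only [LinearMap.mem_ker, Matrix.mulVecLin_apply]
      rw [Matrix.mulVec_mulVec, h2, Matrix.zero_mulVec]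
    have h1 : Module.finrank ℂ (ℂ ∙ u) = 1 := finrank_span_singleton hw
    have h2' : Module.finrank ℂ (LinearMap.ker A.mulVecLin) ≤ 1 := by
      rw [← h1]; exact Submodule.finrank_mono hK
    have h3' : Module.finrank ℂ (LinearMap.range A.mulVecLin) ≤ 1 :=
      le_trans (Submodule.finrank_mono (le_trans hrange hK)) h1.le
    have h4 := LinearMap.finrank_range_add_finrank_ker A.mulVecLin
    rw [Module.finrank_fin_fun] at h4
    omega
  obtain ⟨x, hxk, hxs⟩ := hx
  set f : Fin 3 → (Fin 3 → ℂ) := ![u, x, w] with hf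
  have hind : LinearIndependent ℂ f := by
    rw [Fintype.linearIndependent_iff]
    intro g hg
    have hsum : g 0 • u + g 1 • x + g 2 • w = 0 := by
      simpa [hf, Fin.sum_univ_three] using hg
    have h1' := key3 A _ _ _ _ _ _ hsum
    rw [hu, hxk] at h1'
    simp only [smul_zero, zero_add] at h1'
    have hg2 : g 2 = 0 := by
      rcases smul_eq_zero.mp h1' with h | h
      · exact h
      · exact absurd h hw
    rw [hg2, zero_smul, add_zero] at hsum
    have hg1 : g 1 = 0 := by
      by_contra hg1
      apply hxs
      rw [Submodule.mem_span_singleton]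
      refine ⟨-(g 0)/g 1, funext fun i => ?_⟩
      have hs := congrFun hsum i
      simp only [Pi.add_apply, Pi.smul_apply, Pi.zero_apply, smul_eq_mul] at hs ⊢
      field_simp
      first
        | linear_combination hs
        | linear_combination -hs
    rw [hg1, zero_smul, add_zero] at hsum
    have hg0 : g 0 = 0 := by
      rcases smul_eq_zero.mp hsum with h | h
      · exact h
      · exact absurd h hw
    intro i; fin_cases i <;> assumption
  refine ⟨Matrix.of fun i k => f k i, unit_of_cols hind, ?_⟩
  ext i k
  have EU := congrFun hu i
  have EX := congrFun hxk i
  simp only [Matrix.mulVec, dotProduct, Matrix.mul_apply, Fin.sum_univ_three,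
    Pi.zero_apply] at EU EX
  simp only [Matrix.mul_apply, Matrix.of_apply, Fin.sum_univ_three]
  fin_cases k
  · simp only [hf]
    simp [Matrix.mulVec, dotProduct, Matrix.mul_apply, Fin.sum_univ_three,
      Matrix.vecHead, Matrix.vecTail]
    linear_combination EU
  · simp only [hf]
    simp [Matrix.mulVec, dotProduct, Matrix.mul_apply, Fin.sum_univ_three,
      Matrix.vecHead, Matrix.vecTail]
    linear_combination EX
  · simp only [hf]
    simp [hu_def, Matrix.mulVec, dotProduct, Matrix.mul_apply, Fin.sum_univ_three,
      Matrix.vecHead, Matrix.vecTail]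

private lemma exists_gen (N : Submodule ℂ (Matrix (Fin 3) (Fin 3) ℂ))
    (hdim : Module.finrank ℂ N = 2) :
    ∃ A B : Matrix (Fin 3) (Fin 3) ℂ, A ∈ N ∧ B ∈ N ∧
      ∀ M, (M ∈ N ↔ ∃ s t : ℂ, M = s • A + t • B) := by
  let b := Module.finBasisOfFinrankEq ℂ N hdim
  refine ⟨(b 0 : N), (b 1 : N), (b 0).2, (b 1).2, fun M => ?_⟩
  constructor
  · intro hM
    have hrepr := b.sum_repr ⟨M, hM⟩
    rw [Fin.sum_univ_two] at hrepr
    refine ⟨b.repr ⟨M, hM⟩ 0, b.repr ⟨M, hM⟩ 1, ?_⟩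
    have := congrArg (Subtype.val) hrepr
    simpa using this.symm
  · rintro ⟨s, t, rfl⟩
    exact N.add_mem (N.smul_mem s (b 0).2) (N.smul_mem t (b 1).2)

private noncomputable def Emat (α β : ℂ) : Matrix (Fin 3) (Fin 3) ℂ :=
  !![0, β, 0; α, 0, β; 0, -α, 0]

private def Jm : Matrix (Fin 3) (Fin 3) ℂ := !![0,1,0;0,0,1;0,0,0]

private lemma conj_mul3 {P : Matrix (Fin 3) (Fin 3) ℂ} (hP : IsUnit P.det)
    (X Y : Matrix (Fin 3) (Fin 3) ℂ) :
    (P⁻¹ * X * P) * (P⁻¹ * Y * P) = P⁻¹ * (X * Y) * P := by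
  have h1 : P * (P⁻¹ * (Y * P)) = Y * P := by
    rw [← Matrix.mul_assoc, Matrix.mul_nonsing_inv _ hP, Matrix.one_mul]
  calc (P⁻¹ * X * P) * (P⁻¹ * Y * P) = P⁻¹ * X * (P * (P⁻¹ * (Y * P))) := by
        simp only [Matrix.mul_assoc]
    _ = P⁻¹ * X * (Y * P) := by rw [h1]
    _ = P⁻¹ * (X * Y) * P := by simp only [Matrix.mul_assoc]

private lemma conj_word3 {P : Matrix (Fin 3) (Fin 3) ℂ} (hP : IsUnit P.det)
    (X Y Z : Matrix (Fin 3) (Fin 3) ℂ) :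
    P⁻¹ * (X * Y * Z) * P = (P⁻¹ * X * P) * (P⁻¹ * Y * P) * (P⁻¹ * Z * P) := by
  rw [conj_mul3 hP X Y, conj_mul3 hP (X*Y) Z]

private lemma conj_lin {P : Matrix (Fin 3) (Fin 3) ℂ} (s t : ℂ)
    (X Y : Matrix (Fin 3) (Fin 3) ℂ) :
    P⁻¹ * (s • X + t • Y) * P = s • (P⁻¹ * X * P) + t • (P⁻¹ * Y * P) := by
  rw [Matrix.mul_add, Matrix.add_mul]
  congr 1 <;> rw [Matrix.mul_smul, Matrix.smul_mul]

private lemma mul_linear (X Y U V : Matrix (Fin 3) (Fin 3) ℂ) (s t : ℂ) :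
    X * (s • U + t • V) * Y = s • (X * U * Y) + t • (X * V * Y) := by
  rw [Matrix.mul_add, Matrix.add_mul]
  congr 1 <;> rw [Matrix.mul_smul, Matrix.smul_mul]

private lemma conj_back {P : Matrix (Fin 3) (Fin 3) ℂ} (hP : IsUnit P.det)
    (X : Matrix (Fin 3) (Fin 3) ℂ) : P * (P⁻¹ * X * P) * P⁻¹ = X := by
  have h1 : P * (P⁻¹ * X * P) * P⁻¹ = (P * P⁻¹) * X * (P * P⁻¹) := by noncomm_ring
  rw [h1, Matrix.mul_nonsing_inv _ hP, Matrix.one_mul, Matrix.mul_one]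

private lemma lower_of {C : Matrix (Fin 3) (Fin 3) ℂ} (h00 : C 0 0 = 0) (h10 : C 1 0 = 0)
    (h11 : C 1 1 = 0) (h20 : C 2 0 = 0) (h21 : C 2 1 = 0) (h22 : C 2 2 = 0) :
    ∀ i j : Fin 3, j ≤ i → C i j = 0 := by
  intro i j hij
  fin_cases i <;> fin_cases j <;> simp_all

private lemma cube_to_words {C D : Matrix (Fin 3) (Fin 3) ℂ}
    (hcube : ∀ s t : ℂ, (s • C + t • D) ^ 3 = 0) :
    C*C*C = 0 ∧ D*D*D = 0 ∧ C*C*D + C*D*C + D*C*C = 0 ∧ C*D*D + D*C*D + D*D*C = 0 := by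
  have key : ∀ X Y : Matrix (Fin 3) (Fin 3) ℂ, (X + Y)^3 = X*X*X + (X*X*Y + X*Y*X + Y*X*X)
      + (X*Y*Y + Y*X*Y + Y*Y*X) + Y*Y*Y := by
    intro X Y
    rw [pow_succ, pow_two]
    noncomm_ring
  have hC3 : C*C*C = 0 := by
    have := hcube 1 0
    rw [pow_succ, pow_two] at this
    simpa using this
  have hD3 : D*D*D = 0 := by
    have := hcube 0 1
    rw [pow_succ, pow_two] at this
    simpa using this
  have h1 := hcube 1 1
  have h2 := hcube 1 (-1)
  simp only [one_smul, neg_one_smul, ← sub_eq_add_neg] at h1 h2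
  rw [key] at h1
  have key2 : (C - D)^3 = C*C*C - (C*C*D + C*D*C + D*C*C)
      + (C*D*D + D*C*D + D*D*C) - D*D*D := by
    rw [pow_succ, pow_two]
    noncomm_ring
  rw [key2] at h2
  rw [hC3, hD3] at h1 h2
  refine ⟨hC3, hD3, ?_, ?_⟩ <;>
  · ext i j
    have a1 := congrFun (congrFun h1 i) j
    have a2 := congrFun (congrFun h2 i) j
    simp only [Matrix.add_apply, Matrix.sub_apply, Matrix.neg_apply, Matrix.zero_apply,
      zero_add, add_zero, zero_sub, sub_zero] at a1 a2 ⊢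
    first
      | linear_combination (a1 - a2)/2
      | linear_combination (a1 + a2)/2

set_option maxHeartbeats 1600000 in
private theorem caseJ (C D : Matrix (Fin 3) (Fin 3) ℂ)
    (hcube : ∀ s t : ℂ, (s • C + t • D) ^ 3 = 0) (hC2 : C * C ≠ 0) :
    (∃ P : Matrix (Fin 3) (Fin 3) ℂ, IsUnit P ∧
      ∀ s t : ℂ, ∀ i j : Fin 3, j ≤ i → (P⁻¹ * (s • C + t • D) * P) i j = 0) ∨
    (∃ P : Matrix (Fin 3) (Fin 3) ℂ, IsUnit P ∧
      ∀ M : Matrix (Fin 3) (Fin 3) ℂ,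
        (∃ s t : ℂ, M = s • C + t • D) ↔ ∃ α β : ℂ, M = P * Emat α β * P⁻¹) := by
  obtain ⟨hC3, hD3, hS1, hS2⟩ := cube_to_words hcube
  have hC3' : C ^ 3 = 0 := by rw [pow_succ, pow_two]; exact hC3
  obtain ⟨P1, hP1, hCP1⟩ := jordan3 hC3' hC2
  have hP1d : IsUnit P1.det := (Matrix.isUnit_iff_isUnit_det P1).mp hP1
  have hCconj : P1⁻¹ * C * P1 = Jm := by
    rw [Matrix.mul_assoc, hCP1, ← Matrix.mul_assoc, Matrix.nonsing_inv_mul _ hP1d,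
      Matrix.one_mul]
    rfl
  set Bm := P1⁻¹ * D * P1 with hBm_def
  have tS1 : Jm*Jm*Bm + Jm*Bm*Jm + Bm*Jm*Jm = 0 := by
    have h := congrArg (fun X => P1⁻¹ * X * P1) hS1
    simp only [Matrix.mul_add, Matrix.add_mul, Matrix.mul_zero, Matrix.zero_mul] at h
    rw [conj_word3 hP1d, conj_word3 hP1d, conj_word3 hP1d, hCconj] at h
    simpa using h
  have tS2 : Jm*Bm*Bm + Bm*Jm*Bm + Bm*Bm*Jm = 0 := by
    have h := congrArg (fun X => P1⁻¹ * X * P1) hS2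
    simp only [Matrix.mul_add, Matrix.add_mul, Matrix.mul_zero, Matrix.zero_mul] at h
    rw [conj_word3 hP1d, conj_word3 hP1d, conj_word3 hP1d, hCconj] at h
    simpa using h
  have tB3 : Bm*Bm*Bm = 0 := by
    have h := congrArg (fun X => P1⁻¹ * X * P1) hD3
    rw [conj_word3 hP1d] at h
    simpa using h
  have E1a := congrFun (congrFun tS1 0) 0
  have E1b := congrFun (congrFun tS1 0) 1
  have E1c := congrFun (congrFun tS1 0) 2
  have E2a := congrFun (congrFun tS2 0) 0
  have E2b := congrFun (congrFun tS2 0) 1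
  have E3a := congrFun (congrFun tB3 0) 0
  have E3b := congrFun (congrFun tB3 1) 1
  simp only [Jm, Matrix.add_apply, Matrix.mul_apply, Fin.sum_univ_three, Matrix.zero_apply,
    Matrix.of_apply, Matrix.cons_val', Matrix.cons_val_zero, Matrix.cons_val_one,
    Matrix.head_cons, Matrix.empty_val', Matrix.cons_val_fin_one, Matrix.head_fin_const,
    Matrix.cons_val_two, Matrix.tail_cons] at E1a E1b E1c E2a E2b E3a E3b
  have h20 : Bm 2 0 = 0 := by linear_combination E1a
  have h21 : Bm 2 1 = -(Bm 1 0) := by linear_combination E1b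
  have h22 : Bm 2 2 = -(Bm 0 0) - Bm 1 1 := by linear_combination E1c
  by_cases ha : Bm 1 0 = 0
  · -- triangularizable case
    have h21' : Bm 2 1 = 0 := by rw [h21, ha, neg_zero]
    rw [ha, h20, h21'] at E3a E3b
    ring_nf at E3a E3b
    have hp : Bm 0 0 = 0 := by
      have : (Bm 0 0) ^ 3 = 0 := by linear_combination E3a
      exact pow_eq_zero_iff (by norm_num) |>.mp this
    have hu : Bm 1 1 = 0 := by
      have : (Bm 1 1) ^ 3 = 0 := by linear_combination E3b
      exact pow_eq_zero_iff (by norm_num) |>.mp this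
    have h22' : Bm 2 2 = 0 := by rw [h22, hp, hu]; ring
    left
    refine ⟨P1, hP1, fun s t i j hij => ?_⟩
    rw [conj_lin, hCconj, ← hBm_def]
    refine lower_of ?_ ?_ ?_ ?_ ?_ ?_ i j hij <;>
      · simp [Jm, Matrix.add_apply, Matrix.smul_apply, smul_eq_mul, Matrix.mul_apply, Matrix.of_apply, Matrix.cons_val', Matrix.cons_val_zero, Matrix.cons_val_one, Matrix.head_cons, Matrix.empty_val', Matrix.cons_val_fin_one, Matrix.head_fin_const, Matrix.cons_val_two, Matrix.tail_cons, Matrix.vecHead, Matrix.vecTail, Fin.sum_univ_three, hp, hu, ha, h20, h21', h22', -mul_eq_zero]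
        try ring
  · -- exceptional case
    have hu : Bm 1 1 = -2 * Bm 0 0 := by
      have haux : Bm 1 0 * (2 * Bm 0 0 + Bm 1 1) = 0 := by
        rw [h20] at E2a
        linear_combination E2a
      rcases mul_eq_zero.mp haux with h | h
      · exact absurd h ha
      · linear_combination h
    rw [h20, h21, hu] at E2b E3a
    have hw : Bm 1 0 * Bm 1 2 = Bm 1 0 * Bm 0 1 + 3 * (Bm 0 0)^2 := by
      linear_combination -E2b
    have hr : (Bm 1 0)^2 * Bm 0 2 = (Bm 0 0)^3 := by
      linear_combination -E3a
    set p := Bm 0 0 with hp_def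
    set q := Bm 0 1 with hq_def
    set a := Bm 1 0 with ha_def
    have hval : Bm = !![p, q, p^3/a^2; a, -2*p, q + 3*p^2/a; 0, -a, p] := by
      ext i j
      fin_cases i <;> fin_cases j
      · rfl
      · rfl
      · show Bm 0 2 = p^3/a^2
        rw [eq_div_iff (pow_ne_zero 2 ha)]; linear_combination hr
      · rfl
      · show Bm 1 1 = -2*p
        exact hu
      · show Bm 1 2 = q + 3*p^2/a
        rw [eq_comm, add_comm, div_add' _ _ _ ha, eq_comm, eq_div_iff ha]
        linear_combination hw
      · exact h20
      · show Bm 2 1 = -a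
        rw [h21]
      · show Bm 2 2 = p
        rw [h22, hu]; ring
    set Q : Matrix (Fin 3) (Fin 3) ℂ := !![1, p/a, -(p^2/a^2); 0, 1, p/a; 0, 0, 1] with hQ_def
    set Qi : Matrix (Fin 3) (Fin 3) ℂ := !![1, -(p/a), 2*(p^2/a^2); 0, 1, -(p/a); 0, 0, 1]
      with hQi_def
    have hQQi : Q * Qi = 1 := by
      ext i j
      fin_cases i <;> fin_cases j <;>
        · simp only [hQ_def, hQi_def, Matrix.one_fin_three, Matrix.mul_apply, Matrix.of_apply, Matrix.cons_val', Matrix.cons_val_zero, Matrix.cons_val_one, Matrix.head_cons, Matrix.empty_val', Matrix.cons_val_fin_one, Matrix.head_fin_const, Matrix.cons_val_two, Matrix.tail_cons, Matrix.vecHead, Matrix.vecTail, Fin.sum_univ_three, Fin.zero_eta, Fin.mk_one, Fin.reduceFinMk, Matrix.cons_val, Fin.isValue, Function.comp_apply, Fin.succ_zero_eq_one, Fin.succ_one_eq_two]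
          try field_simp
          try ring
    have hQiQ : Qi * Q = 1 := mul_eq_one_comm.mp hQQi
    have hQunit : IsUnit Q := by
      letI := invertibleOfRightInverse Q Qi hQQi
      exact isUnit_of_invertible Q
    have hQinv : Q⁻¹ = Qi := Matrix.inv_eq_right_inv hQQi
    have hJQ : Qi * Jm * Q = Jm := by
      ext i j
      fin_cases i <;> fin_cases j <;>
        · simp only [hQ_def, hQi_def, Jm, Matrix.mul_apply, Matrix.of_apply, Matrix.cons_val', Matrix.cons_val_zero, Matrix.cons_val_one, Matrix.head_cons, Matrix.empty_val', Matrix.cons_val_fin_one, Matrix.head_fin_const, Matrix.cons_val_two, Matrix.tail_cons, Matrix.vecHead, Matrix.vecTail, Fin.sum_univ_three, Fin.zero_eta, Fin.mk_one, Fin.reduceFinMk, Matrix.cons_val, Fin.isValue, Function.comp_apply, Fin.succ_zero_eq_one, Fin.succ_one_eq_two]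
          try field_simp
          try ring
    have hBQ : Qi * Bm * Q = Emat a q := by
      rw [hval]
      ext i j
      fin_cases i <;> fin_cases j <;>
        · simp only [hQ_def, hQi_def, Emat, Matrix.mul_apply, Matrix.of_apply, Matrix.cons_val', Matrix.cons_val_zero, Matrix.cons_val_one, Matrix.head_cons, Matrix.empty_val', Matrix.cons_val_fin_one, Matrix.head_fin_const, Matrix.cons_val_two, Matrix.tail_cons, Matrix.vecHead, Matrix.vecTail, Fin.sum_univ_three, Fin.zero_eta, Fin.mk_one, Fin.reduceFinMk, Matrix.cons_val, Fin.isValue, Function.comp_apply, Fin.succ_zero_eq_one, Fin.succ_one_eq_two]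
          try field_simp
          try ring
    -- assemble
    have hPunit : IsUnit (P1 * Q) := hP1.mul hQunit
    have hPd : IsUnit (P1 * Q).det := (Matrix.isUnit_iff_isUnit_det _).mp hPunit
    have hPinv : (P1 * Q)⁻¹ = Qi * P1⁻¹ := by rw [Matrix.mul_inv_rev, hQinv]
    have hCfin : (P1 * Q)⁻¹ * C * (P1 * Q) = Emat 0 1 := by
      rw [hPinv]
      have : Qi * P1⁻¹ * C * (P1 * Q) = Qi * (P1⁻¹ * C * P1) * Q := by
        simp only [Matrix.mul_assoc]
      rw [this, hCconj, hJQ]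
      ext i j
      fin_cases i <;> fin_cases j <;>
        · simp only [Jm, Emat, Matrix.mul_apply, Matrix.of_apply, Matrix.cons_val', Matrix.cons_val_zero, Matrix.cons_val_one, Matrix.head_cons, Matrix.empty_val', Matrix.cons_val_fin_one, Matrix.head_fin_const, Matrix.cons_val_two, Matrix.tail_cons, Matrix.vecHead, Matrix.vecTail, Fin.sum_univ_three, Fin.zero_eta, Fin.mk_one, Fin.reduceFinMk, Matrix.cons_val, Fin.isValue, Function.comp_apply, Fin.succ_zero_eq_one, Fin.succ_one_eq_two]
          try norm_num
    have hDfin : (P1 * Q)⁻¹ * D * (P1 * Q) = Emat a q := by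
      rw [hPinv]
      have : Qi * P1⁻¹ * D * (P1 * Q) = Qi * (P1⁻¹ * D * P1) * Q := by
        simp only [Matrix.mul_assoc]
      rw [this, ← hBm_def, hBQ]
    have hCexp : C = (P1 * Q) * Emat 0 1 * (P1 * Q)⁻¹ := by
      rw [← hCfin, conj_back hPd]
    have hDexp : D = (P1 * Q) * Emat a q * (P1 * Q)⁻¹ := by
      rw [← hDfin, conj_back hPd]
    have Elin : ∀ s t : ℂ, s • Emat 0 1 + t • Emat a q = Emat (t*a) (s + t*q) := by
      intro s t
      ext i j
      fin_cases i <;> fin_cases j <;>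
        · simp [Emat, Matrix.add_apply, Matrix.smul_apply, smul_eq_mul, Matrix.mul_apply, Matrix.of_apply, Matrix.cons_val', Matrix.cons_val_zero, Matrix.cons_val_one, Matrix.head_cons, Matrix.empty_val', Matrix.cons_val_fin_one, Matrix.head_fin_const, Matrix.cons_val_two, Matrix.tail_cons, Matrix.vecHead, Matrix.vecTail, Fin.sum_univ_three, -mul_eq_zero]
          try ring
    right
    refine ⟨P1 * Q, hPunit, fun M => ⟨?_, ?_⟩⟩
    · rintro ⟨s, t, rfl⟩
      refine ⟨t*a, s + t*q, ?_⟩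
      rw [hCexp, hDexp, ← mul_linear, Elin]
    · rintro ⟨α, β, rfl⟩
      refine ⟨β - (α/a)*q, α/a, ?_⟩
      rw [hCexp, hDexp, ← mul_linear, Elin]
      have h1 : (α/a)*a = α := div_mul_cancel₀ α ha
      have h2 : β - α/a*q + α/a*q = β := by ring
      rw [h1, h2]

private def Fm : Matrix (Fin 3) (Fin 3) ℂ := !![0,0,1;0,0,0;0,0,0]

set_option maxHeartbeats 1600000 in
private theorem caseSq (A B : Matrix (Fin 3) (Fin 3) ℂ) (hA : A * A = 0) (hB : B * B = 0)
    (hAB : A * B + B * A = 0) :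
    ∃ P : Matrix (Fin 3) (Fin 3) ℂ, IsUnit P ∧
      ∀ s t : ℂ, ∀ i j : Fin 3, j ≤ i → (P⁻¹ * (s • A + t • B) * P) i j = 0 := by
  by_cases hA0 : A = 0
  · by_cases hB0 : B = 0
    · refine ⟨1, isUnit_one, fun s t i j hij => ?_⟩
      rw [hA0, hB0]
      simp
    · obtain ⟨P, hP, hBP⟩ := rank1 hB hB0
      have hPd : IsUnit P.det := (Matrix.isUnit_iff_isUnit_det P).mp hP
      have hBconj : P⁻¹ * B * P = Fm := by
        rw [Matrix.mul_assoc, hBP, ← Matrix.mul_assoc, Matrix.nonsing_inv_mul _ hPd,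
          Matrix.one_mul]
        rfl
      refine ⟨P, hP, fun s t i j hij => ?_⟩
      rw [conj_lin, hBconj, hA0]
      refine lower_of ?_ ?_ ?_ ?_ ?_ ?_ i j hij <;>
        simp [Fm, Matrix.add_apply, Matrix.smul_apply, Matrix.vecHead, Matrix.vecTail]
  · obtain ⟨P, hP, hAP⟩ := rank1 hA hA0
    have hPd : IsUnit P.det := (Matrix.isUnit_iff_isUnit_det P).mp hP
    have hAconj : P⁻¹ * A * P = Fm := by
      rw [Matrix.mul_assoc, hAP, ← Matrix.mul_assoc, Matrix.nonsing_inv_mul _ hPd,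
        Matrix.one_mul]
      rfl
    set Bc := P⁻¹ * B * P with hBc_def
    have tB : Bc * Bc = 0 := by
      rw [hBc_def, conj_mul3 hPd, hB, Matrix.mul_zero, Matrix.zero_mul]
    have tAB : Fm * Bc + Bc * Fm = 0 := by
      have h := congrArg (fun X => P⁻¹ * X * P) hAB
      simp only [Matrix.mul_add, Matrix.add_mul] at h
      rw [← conj_mul3 hPd A B, ← conj_mul3 hPd B A, hAconj] at h
      simpa using h
    have E00 := congrFun (congrFun tAB 0) 0
    have E01 := congrFun (congrFun tAB 0) 1
    have E12 := congrFun (congrFun tAB 1) 2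
    have E02 := congrFun (congrFun tAB 0) 2
    have F00 := congrFun (congrFun tB 0) 0
    have F11 := congrFun (congrFun tB 1) 1
    simp only [Fm, Matrix.add_apply, Matrix.mul_apply, Fin.sum_univ_three, Matrix.zero_apply,
      Matrix.of_apply, Matrix.cons_val', Matrix.cons_val_zero, Matrix.cons_val_one,
      Matrix.head_cons, Matrix.empty_val', Matrix.cons_val_fin_one, Matrix.head_fin_const,
      Matrix.cons_val_two, Matrix.tail_cons] at E00 E01 E12 E02 F00 F11
    have h20 : Bc 2 0 = 0 := by linear_combination E00
    have h21 : Bc 2 1 = 0 := by linear_combination E01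
    have h10 : Bc 1 0 = 0 := by linear_combination E12
    have h22 : Bc 2 2 = -(Bc 0 0) := by linear_combination E02
    have h00 : Bc 0 0 = 0 := by
      have : (Bc 0 0)^2 = 0 := by
        linear_combination F00 - (Bc 0 1)*h10 - (Bc 0 2)*h20
      exact pow_eq_zero_iff (by norm_num) |>.mp this
    have h11 : Bc 1 1 = 0 := by
      have : (Bc 1 1)^2 = 0 := by
        linear_combination F11 - (Bc 0 1)*h10 - (Bc 1 2)*h21
      exact pow_eq_zero_iff (by norm_num) |>.mp this
    have h22' : Bc 2 2 = 0 := by rw [h22, h00, neg_zero]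
    refine ⟨P, hP, fun s t i j hij => ?_⟩
    rw [conj_lin, hAconj, ← hBc_def]
    refine lower_of ?_ ?_ ?_ ?_ ?_ ?_ i j hij <;>
      · simp [Fm, Matrix.add_apply, Matrix.smul_apply, Matrix.vecHead, Matrix.vecTail,
          h00, h10, h11, h20, h21, h22', -mul_eq_zero]
        try ring

private lemma caseJ_wrap (N : Submodule ℂ (Matrix (Fin 3) (Fin 3) ℂ))
    (A B C D : Matrix (Fin 3) (Fin 3) ℂ)
    (hgen : ∀ M, (M ∈ N ↔ ∃ s t : ℂ, M = s • A + t • B))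
    (htrans : ∀ M, (∃ s t : ℂ, M = s • A + t • B) ↔ (∃ s t : ℂ, M = s • C + t • D))
    (hcube : ∀ s t : ℂ, (s • C + t • D) ^ 3 = 0) (hC2 : C * C ≠ 0) :
    (∃ P : Matrix (Fin 3) (Fin 3) ℂ, IsUnit P ∧
      ∀ M ∈ N, ∀ i j : Fin 3, j ≤ i → (P⁻¹ * M * P) i j = 0) ∨
    (∃ P : Matrix (Fin 3) (Fin 3) ℂ, IsUnit P ∧
      ∀ M, M ∈ N ↔ ∃ α β : ℂ, M = P * !![0, β, 0; α, 0, β; 0, -α, 0] * P⁻¹) := by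
  rcases caseJ C D hcube hC2 with ⟨P, hP, hent⟩ | ⟨P, hP, hiff⟩
  · left
    refine ⟨P, hP, fun M hM i j hij => ?_⟩
    obtain ⟨s, t, rfl⟩ := (htrans M).mp ((hgen M).mp hM)
    exact hent s t i j hij
  · right
    refine ⟨P, hP, fun M => Iff.trans (hgen M) (Iff.trans (htrans M) ?_)⟩
    exact hiff M

theorem stmt_10 (N : Submodule ℂ (Matrix (Fin 3) (Fin 3) ℂ))
    (hnil : ∀ M ∈ N, IsNilpotent M)
    (hdim : Module.finrank ℂ N = 2) :
    (∃ P : Matrix (Fin 3) (Fin 3) ℂ, IsUnit P ∧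
      ∀ M ∈ N, ∀ i j : Fin 3, j ≤ i → (P⁻¹ * M * P) i j = 0) ∨
    (∃ P : Matrix (Fin 3) (Fin 3) ℂ, IsUnit P ∧
      ∀ M, M ∈ N ↔ ∃ α β : ℂ, M = P * !![0, β, 0; α, 0, β; 0, -α, 0] * P⁻¹) := by
  obtain ⟨A, B, hAN, hBN, hgen⟩ := exists_gen N hdim
  have hcube : ∀ s t : ℂ, (s • A + t • B) ^ 3 = 0 := fun s t =>
    cube_zero (hnil _ ((hgen _).mpr ⟨s, t, rfl⟩))
  by_cases hA2 : A * A = 0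
  · by_cases hB2 : B * B = 0
    · by_cases hAB2 : (A + B) * (A + B) = 0
      · -- all squares vanish : triangularizable
        have hAB : A * B + B * A = 0 := by
          have h := hAB2
          have hx : (A + B) * (A + B) = A * A + (A * B + B * A) + B * B := by noncomm_ring
          rw [hx, hA2, hB2] at h
          simpa using h
        obtain ⟨P, hP, hent⟩ := caseSq A B hA2 hB2 hAB
        left
        refine ⟨P, hP, fun M hM i j hij => ?_⟩
        obtain ⟨s, t, rfl⟩ := (hgen M).mp hM
        exact hent s t i j hij
      · refine caseJ_wrap N A B (A + B) B hgen (fun M => ⟨?_, ?_⟩) ?_ hAB2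
        · rintro ⟨s, t, rfl⟩
          exact ⟨s, t - s, by module⟩
        · rintro ⟨s, t, rfl⟩
          exact ⟨s, t + s, by module⟩
        · intro s t
          have hx : s • (A + B) + t • B = s • A + (s + t) • B := by module
          rw [hx]
          exact hcube s (s + t)
    · refine caseJ_wrap N A B B A hgen (fun M => ⟨?_, ?_⟩) ?_ hB2
      · rintro ⟨s, t, rfl⟩
        exact ⟨t, s, by module⟩
      · rintro ⟨s, t, rfl⟩
        exact ⟨t, s, by module⟩
      · intro s t
        have hx : s • B + t • A = t • A + s • B := by module
        rw [hx]
        exact hcube t s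
  · refine caseJ_wrap N A B A B hgen (fun M => Iff.rfl) hcube hA2
end

section
/- Let X be a complex vector space and a₁,…,aₙ, b₁,…,bₙ, u₁,…,uₙ, v₁,…,vₙ ∈ L(X) with {a₁,…,aₙ} and {u₁,…,uₙ} both linearly independent and span{a₁,…,aₙ} = span{u₁,…,uₙ}. If Σᵢ aᵢ x bᵢ = Σᵢ uᵢ x vᵢ for all x ∈ L(X), then there is an invertible matrix P ∈ Mₙ(ℂ) with (vᵢ∘uⱼ)ᵢⱼ = P⁻¹ (bᵢ∘aⱼ)ᵢⱼ P as n×n matrices over L(X), where P is the change-of-basis matrix between the two bases (uᵢ = Σⱼ Pⱼᵢ aⱼ gives vᵢ accordingly). -/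
/-- Cancellation lemma: if the `aᵢ` are linearly independent and
`∑ aᵢ x cᵢ = 0` for all `x`, then all `cᵢ = 0`. -/
lemma elem_cancel {X : Type*} [AddCommGroup X] [Module ℂ X]
    {n : ℕ} {a : Fin n → Module.End ℂ X} (ha : LinearIndependent ℂ a)
    (c : Fin n → Module.End ℂ X)
    (h : ∀ x : Module.End ℂ X, ∑ i : Fin n, a i * x * c i = 0) :
    ∀ i, c i = 0 := by
  intro i
  ext ξ
  simp only [LinearMap.zero_apply]
  rw [← Module.forall_dual_apply_eq_zero_iff ℂ]
  intro f
  have hop : (∑ j, f (c j ξ) • a j) = 0 := by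
    ext η
    have := congrArg (fun T : Module.End ℂ X => T ξ) (h (f.smulRight η))
    simpa [LinearMap.sum_apply, Module.End.mul_apply, LinearMap.smulRight_apply,
      map_smul] using this
  exact Fintype.linearIndependent_iff.mp ha _ hop i

theorem stmt_13 {X : Type*} [AddCommGroup X] [Module ℂ X]
    (n : ℕ) (a b u v : Fin n → Module.End ℂ X)
    (ha : LinearIndependent ℂ a) (hu : LinearIndependent ℂ u)
    (hspan : Submodule.span ℂ (Set.range a) = Submodule.span ℂ (Set.range u))
    (heq : ∀ x : Module.End ℂ X,
      ∑ i : Fin n, a i * x * b i = ∑ i : Fin n, u i * x * v i) :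
    ∃ P : Matrix (Fin n) (Fin n) ℂ, IsUnit P ∧
      (∀ i, u i = ∑ j : Fin n, P j i • a j) ∧
      ∀ i j, v i * u j =
        ∑ k : Fin n, ∑ l : Fin n, (P⁻¹ i k * P l j) • (b k * a l) := by
  classical
  set B1 : Module.Basis (Fin n) ℂ (Submodule.span ℂ (Set.range a)) := Module.Basis.span ha with hB1
  set B2 : Module.Basis (Fin n) ℂ (Submodule.span ℂ (Set.range a)) :=
    (Module.Basis.span hu).map (LinearEquiv.ofEq _ _ hspan.symm) with hB2
  have hB2app : ∀ i, (B2 i).1 = u i := by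
    intro i
    simp [hB2, Module.Basis.span_apply]
  have hB1app : ∀ i, (B1 i).1 = a i := by
    intro i
    simp [hB1, Module.Basis.span_apply]
  set P : Matrix (Fin n) (Fin n) ℂ := B1.toMatrix B2 with hP
  have hPu : IsUnit P := by
    have := B1.invertibleToMatrix B2
    exact isUnit_of_invertible P
  have hchange : ∀ i, u i = ∑ j : Fin n, P j i • a j := by
    intro i
    have := B1.sum_toMatrix_smul_self B2 i
    have := congrArg (Subtype.val) this
    rw [← hB2app i, ← this]
    push_cast
    refine Finset.sum_congr rfl fun j _ => ?_
    rw [hB1app j]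
  refine ⟨P, hPu, hchange, ?_⟩
  -- first: b j = ∑ i, P j i • v i
  have hb : ∀ j, b j = ∑ i, P j i • v i := by
    have h0 : ∀ x : Module.End ℂ X,
        ∑ j : Fin n, a j * x * (b j - ∑ i, P j i • v i) = 0 := by
      intro x
      have h1 : ∑ j : Fin n, a j * x * (∑ i, P j i • v i)
          = ∑ i : Fin n, u i * x * v i := by
        calc ∑ j : Fin n, a j * x * (∑ i, P j i • v i)
            = ∑ j : Fin n, ∑ i : Fin n, P j i • (a j * x * v i) := by
              refine Finset.sum_congr rfl fun j _ => ?_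
              rw [Finset.mul_sum]
              exact Finset.sum_congr rfl fun i _ => (mul_smul_comm _ _ _)
          _ = ∑ i : Fin n, ∑ j : Fin n, P j i • (a j * x * v i) := Finset.sum_comm
          _ = ∑ i : Fin n, u i * x * v i := by
              refine Finset.sum_congr rfl fun i _ => ?_
              rw [hchange i, Finset.sum_mul, Finset.sum_mul]
              refine Finset.sum_congr rfl fun j _ => ?_
              rw [smul_mul_assoc, smul_mul_assoc]
      calc ∑ j : Fin n, a j * x * (b j - ∑ i, P j i • v i)
          = ∑ j : Fin n, (a j * x * b j - a j * x * (∑ i, P j i • v i)) := by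
            refine Finset.sum_congr rfl fun j _ => mul_sub _ _ _
        _ = (∑ j : Fin n, a j * x * b j) - ∑ j : Fin n, a j * x * (∑ i, P j i • v i) := by
            rw [Finset.sum_sub_distrib]
        _ = 0 := by rw [heq, h1, sub_self]
    intro j
    have := elem_cancel ha _ h0 j
    exact (sub_eq_zero.mp this)
  have hdet : IsUnit P.det := (Matrix.isUnit_iff_isUnit_det P).mp hPu
  have hinv : P⁻¹ * P = 1 := Matrix.nonsing_inv_mul P hdet
  have hv : ∀ i, v i = ∑ k, P⁻¹ i k • b k := by
    intro i
    calc v i = ∑ m, (1 : Matrix (Fin n) (Fin n) ℂ) i m • v m := by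
          simp [Matrix.one_apply, ite_smul]
      _ = ∑ m, (∑ k, P⁻¹ i k * P k m) • v m := by rw [← hinv]; rfl
      _ = ∑ m, ∑ k, (P⁻¹ i k * P k m) • v m := by
          simp [Finset.sum_smul]
      _ = ∑ k, ∑ m, (P⁻¹ i k * P k m) • v m := Finset.sum_comm
      _ = ∑ k, P⁻¹ i k • b k := by
          refine Finset.sum_congr rfl fun k _ => ?_
          rw [hb k, Finset.smul_sum]
          simp [smul_smul]
  intro i j
  rw [hv i, hchange j, Finset.sum_mul]
  refine Finset.sum_congr rfl fun k _ => ?_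
  rw [Finset.mul_sum]
  refine Finset.sum_congr rfl fun l _ => ?_
  rw [smul_mul_assoc, mul_smul_comm, smul_smul]
end

section
/- Let u₁,u₂,u₃,v₁,v₂,v₃ be linear operators on a complex vector space X satisfying the relations of Theorem 3 case (ii): v₁u₁ = v₁u₃ = v₃u₁ = v₃u₃ = v₂u₂ = 0, v₁u₂ = ζ₁⊗f = v₂u₃, v₂u₁ = ζ₀⊗f = −v₃u₂, for some ζ₀, ζ₁ ∈ X and f ∈ X*. Then for every x ∈ L(X), the image of φ(x)∘uⱼ (for any j and any input) lies in the 3-dimensional-or-less subspace span{u₂xζ₀, u₂xζ₁, u₁xζ₁ − u₃xζ₀}; that is, φ(x)(span{u₁η, u₂η, u₃η : η ∈ X}) ⊆ span{u₂xζ₀, u₂xζ₁, u₁xζ₁ − u₃xζ₀}, so dim φ(x)²X ≤ 3. -/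
theorem stmt_18 {X : Type*} [AddCommGroup X] [Module ℂ X]
    (u₁ u₂ u₃ v₁ v₂ v₃ : Module.End ℂ X) (ζ₀ ζ₁ : X) (f : Module.Dual ℂ X)
    (h11 : v₁ * u₁ = 0) (h13 : v₁ * u₃ = 0) (h31 : v₃ * u₁ = 0)
    (h33 : v₃ * u₃ = 0) (h22 : v₂ * u₂ = 0)
    (h12 : ∀ η, (v₁ * u₂) η = f η • ζ₁) (h23 : ∀ η, (v₂ * u₃) η = f η • ζ₁)
    (h21 : ∀ η, (v₂ * u₁) η = f η • ζ₀) (h32 : ∀ η, (v₃ * u₂) η = -(f η • ζ₀))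
    (x : Module.End ℂ X) :
    (∀ η ∈ LinearMap.range u₁ ⊔ LinearMap.range u₂ ⊔ LinearMap.range u₃,
      (u₁ * x * v₁ + u₂ * x * v₂ + u₃ * x * v₃) η ∈
        Submodule.span ℂ {u₂ (x ζ₀), u₂ (x ζ₁), u₁ (x ζ₁) - u₃ (x ζ₀)}) ∧
    Module.rank ℂ
      (LinearMap.range ((u₁ * x * v₁ + u₂ * x * v₂ + u₃ * x * v₃) *
        (u₁ * x * v₁ + u₂ * x * v₂ + u₃ * x * v₃))) ≤ 3 := by
  set φ : Module.End ℂ X := u₁ * x * v₁ + u₂ * x * v₂ + u₃ * x * v₃ with hφ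
  have key1 : ∀ a : X, φ (u₁ a) = f a • u₂ (x ζ₀) := by
    intro a
    have e1 : v₁ (u₁ a) = 0 := by
      have := congrArg (fun g : Module.End ℂ X => g a) h11; simpa using this
    have e3 : v₃ (u₁ a) = 0 := by
      have := congrArg (fun g : Module.End ℂ X => g a) h31; simpa using this
    have e2 : v₂ (u₁ a) = f a • ζ₀ := h21 a
    simp [hφ, LinearMap.add_apply, Module.End.mul_apply, e1, e2, e3]
  have key2 : ∀ a : X, φ (u₂ a) = f a • (u₁ (x ζ₁) - u₃ (x ζ₀)) := by
    intro a
    have e2 : v₂ (u₂ a) = 0 := by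
      have := congrArg (fun g : Module.End ℂ X => g a) h22; simpa using this
    have e1 : v₁ (u₂ a) = f a • ζ₁ := h12 a
    have e3 : v₃ (u₂ a) = -(f a • ζ₀) := h32 a
    simp [hφ, LinearMap.add_apply, Module.End.mul_apply, e1, e2, e3, smul_sub, sub_eq_add_neg]
  have key3 : ∀ a : X, φ (u₃ a) = f a • u₂ (x ζ₁) := by
    intro a
    have e1 : v₁ (u₃ a) = 0 := by
      have := congrArg (fun g : Module.End ℂ X => g a) h13; simpa using this
    have e3 : v₃ (u₃ a) = 0 := by
      have := congrArg (fun g : Module.End ℂ X => g a) h33; simpa using this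
    have e2 : v₂ (u₃ a) = f a • ζ₁ := h23 a
    simp [hφ, LinearMap.add_apply, Module.End.mul_apply, e1, e2, e3]
  have hm1 : u₂ (x ζ₀) ∈ Submodule.span ℂ {u₂ (x ζ₀), u₂ (x ζ₁), u₁ (x ζ₁) - u₃ (x ζ₀)} :=
    Submodule.subset_span (by simp)
  have hm2 : u₂ (x ζ₁) ∈ Submodule.span ℂ {u₂ (x ζ₀), u₂ (x ζ₁), u₁ (x ζ₁) - u₃ (x ζ₀)} :=
    Submodule.subset_span (by simp)
  have hm3 : u₁ (x ζ₁) - u₃ (x ζ₀) ∈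
      Submodule.span ℂ {u₂ (x ζ₀), u₂ (x ζ₁), u₁ (x ζ₁) - u₃ (x ζ₀)} :=
    Submodule.subset_span (by simp)
  have main : ∀ η ∈ LinearMap.range u₁ ⊔ LinearMap.range u₂ ⊔ LinearMap.range u₃,
      φ η ∈ Submodule.span ℂ {u₂ (x ζ₀), u₂ (x ζ₁), u₁ (x ζ₁) - u₃ (x ζ₀)} := by
    intro η hη
    rw [Submodule.mem_sup] at hη
    obtain ⟨y, hy, z, hz, rfl⟩ := hη
    rw [Submodule.mem_sup] at hy
    obtain ⟨y₁, hy₁, y₂, hy₂, rfl⟩ := hy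
    obtain ⟨a, rfl⟩ := hy₁
    obtain ⟨b, rfl⟩ := hy₂
    obtain ⟨c, rfl⟩ := hz
    have : φ (u₁ a + u₂ b + u₃ c) = f a • u₂ (x ζ₀) +
        f b • (u₁ (x ζ₁) - u₃ (x ζ₀)) + f c • u₂ (x ζ₁) := by
      rw [map_add, map_add, key1, key2, key3]
    rw [this]
    exact Submodule.add_mem _ (Submodule.add_mem _ (Submodule.smul_mem _ _ hm1)
      (Submodule.smul_mem _ _ hm3)) (Submodule.smul_mem _ _ hm2)
  refine ⟨main, ?_⟩
  have hrange : LinearMap.range (φ * φ) ≤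
      Submodule.span ℂ {u₂ (x ζ₀), u₂ (x ζ₁), u₁ (x ζ₁) - u₃ (x ζ₀)} := by
    rintro _ ⟨η, rfl⟩
    have hφη : φ η ∈ LinearMap.range u₁ ⊔ LinearMap.range u₂ ⊔ LinearMap.range u₃ := by
      have : φ η = u₁ ((x * v₁) η) + u₂ ((x * v₂) η) + u₃ ((x * v₃) η) := by
        simp [hφ, LinearMap.add_apply, Module.End.mul_apply]
      rw [this]
      refine Submodule.add_mem _ (Submodule.add_mem _ ?_ ?_) ?_
      · exact Submodule.mem_sup_left (Submodule.mem_sup_left ⟨_, rfl⟩)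
      · exact Submodule.mem_sup_left (Submodule.mem_sup_right ⟨_, rfl⟩)
      · exact Submodule.mem_sup_right ⟨_, rfl⟩
    have : (φ * φ) η = φ (φ η) := rfl
    rw [this]
    exact main _ hφη
  calc Module.rank ℂ (LinearMap.range (φ * φ))
      ≤ Module.rank ℂ (Submodule.span ℂ {u₂ (x ζ₀), u₂ (x ζ₁), u₁ (x ζ₁) - u₃ (x ζ₀)}) :=
        Submodule.rank_mono hrange
    _ ≤ Cardinal.mk ({u₂ (x ζ₀), u₂ (x ζ₁), u₁ (x ζ₁) - u₃ (x ζ₀)} : Set X) := rank_span_le _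
    _ ≤ 3 := by
        refine le_trans (Cardinal.mk_insert_le) ?_
        refine le_trans (add_le_add_left (Cardinal.mk_insert_le) 1) ?_
        simp
        norm_num
end

section
/- Let X be a complex vector space with dim X ≥ 2 and let a₁,a₂,b₁,b₂ ∈ L(X) with {a₁,a₂} linearly independent but locally linearly dependent (i.e., a₁ζ and a₂ζ are linearly dependent for every ζ ∈ X), so that by Brešar–Šemrl there exist ζ₀ ∈ X and functionals f₁,f₂ with aᵢ = ζ₀⊗fᵢ. If φ(x) = a₁xb₁ + a₂xb₂ has no nonzero eigenvalue for every x ∈ L(X), then b₁ζ₀ = b₂ζ₀ = 0 and consequently φ(x)φ(y) = 0 for all x,y ∈ L(X). -/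
lemma dual_pair_exists {X : Type*} [AddCommGroup X] [Module ℂ X]
    (g₁ g₂ : Module.Dual ℂ X) (hg : LinearIndependent ℂ ![g₁, g₂]) :
    ∃ v : X, g₁ v = 1 ∧ g₂ v = 0 := by
  rw [linearIndependent_fin2] at hg
  by_cases hker : LinearMap.ker g₂ ≤ LinearMap.ker g₁
  · exfalso
    have hmem : g₁ ∈ Submodule.span ℂ (Set.range (fun _ : Unit => g₂)) := by
      apply mem_span_of_iInf_ker_le_ker
      simpa using hker
    rw [Set.range_const, Submodule.mem_span_singleton] at hmem
    obtain ⟨a, ha⟩ := hmem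
    exact hg.2 a ha
  · rw [SetLike.not_le_iff_exists] at hker
    obtain ⟨v, hv2, hv1⟩ := hker
    rw [LinearMap.mem_ker] at hv2
    rw [LinearMap.mem_ker] at hv1
    refine ⟨(g₁ v)⁻¹ • v, ?_, ?_⟩
    · simp [inv_mul_cancel₀ hv1]
    · simp [hv2]

theorem stmt_19 {X : Type*} [AddCommGroup X] [Module ℂ X]
    (hdim : 2 ≤ Module.rank ℂ X)
    (ζ₀ : X) (f₁ f₂ : Module.Dual ℂ X) (hf : LinearIndependent ℂ ![f₁, f₂])
    (a₁ a₂ b₁ b₂ : Module.End ℂ X)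
    (ha₁ : ∀ η, a₁ η = f₁ η • ζ₀) (ha₂ : ∀ η, a₂ η = f₂ η • ζ₀)
    (h : ∀ x : Module.End ℂ X, ∀ c : ℂ, c ≠ 0 →
      ¬ Module.End.HasEigenvalue (a₁ * x * b₁ + a₂ * x * b₂) c) :
    b₁ ζ₀ = 0 ∧ b₂ ζ₀ = 0 ∧
      ∀ x y : Module.End ℂ X,
        (a₁ * x * b₁ + a₂ * x * b₂) * (a₁ * y * b₁ + a₂ * y * b₂) = 0 := by
  -- key: the scalar f₁(x b₁ ζ₀) + f₂(x b₂ ζ₀) vanishes for all x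
  have key : ∀ x : Module.End ℂ X, f₁ (x (b₁ ζ₀)) + f₂ (x (b₂ ζ₀)) = 0 := by
    intro x
    by_contra hs
    have hζ : ζ₀ ≠ 0 := by
      intro h0
      apply hs
      simp [h0, map_zero]
    apply h x _ hs
    apply Module.End.hasEigenvalue_of_hasEigenvector (x := ζ₀)
    constructor
    · rw [Module.End.mem_eigenspace_iff]
      show a₁ (x (b₁ ζ₀)) + a₂ (x (b₂ ζ₀)) = _
      rw [ha₁, ha₂, ← add_smul]
    · exact hζ
  -- swap version of hf
  have hf' : LinearIndependent ℂ ![f₂, f₁] := by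
    rw [linearIndependent_fin2] at hf ⊢
    obtain ⟨h2, h12⟩ := hf
    simp only [Matrix.cons_val_one, Matrix.head_cons, Matrix.cons_val_zero] at h2 h12 ⊢
    refine ⟨fun h0 => h12 0 (by simp [h0]), fun a ha => ?_⟩
    rcases eq_or_ne a 0 with rfl | ha0
    · exact h2 (by simpa using ha.symm)
    · exact h12 a⁻¹ (by rw [← ha, smul_smul, inv_mul_cancel₀ ha0, one_smul])
  obtain ⟨v₁, hv11, hv12⟩ := dual_pair_exists f₁ f₂ hf
  obtain ⟨v₂, hv22, hv21⟩ := dual_pair_exists f₂ f₁ hf'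
  -- plug rank-one operators into key
  have key' : ∀ (g : Module.Dual ℂ X) (v : X),
      g (b₁ ζ₀) * f₁ v + g (b₂ ζ₀) * f₂ v = 0 := by
    intro g v
    have := key (LinearMap.smulRight g v)
    simpa [LinearMap.smulRight_apply, map_smul, smul_eq_mul, mul_comm] using this
  have hb₁ : b₁ ζ₀ = 0 := by
    rw [← Module.forall_dual_apply_eq_zero_iff ℂ]
    intro g
    have := key' g v₁
    simpa [hv11, hv12] using this
  have hb₂ : b₂ ζ₀ = 0 := by
    rw [← Module.forall_dual_apply_eq_zero_iff ℂ]
    intro g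
    have := key' g v₂
    simpa [hv21, hv22] using this
  refine ⟨hb₁, hb₂, fun x y => ?_⟩
  ext η
  show (a₁ * x * b₁ + a₂ * x * b₂) ((a₁ * y * b₁ + a₂ * y * b₂) η) = 0
  have hφη : (a₁ * y * b₁ + a₂ * y * b₂) η = (f₁ (y (b₁ η)) + f₂ (y (b₂ η))) • ζ₀ := by
    show a₁ (y (b₁ η)) + a₂ (y (b₂ η)) = _
    rw [ha₁, ha₂, ← add_smul]
  rw [hφη]
  show a₁ (x (b₁ (_ • ζ₀))) + a₂ (x (b₂ (_ • ζ₀))) = 0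
  simp [map_smul, hb₁, hb₂]
end
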